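/- Let W be an ℓ×ℓ real positive definite matrix, Γ an ℓ×q real matrix such that Ψ := Γᵀ W⁻¹ Γ is positive definite, V a q×q real positive definite matrix, z ∈ ℝ^ℓ, and T a real number. If the reconstruction error (z − Γ c(z))ᵀ W⁻¹ (z − Γ c(z)) exceeds T, where c(z) := Ψ⁻¹ Γᵀ W⁻¹ z, then for every e ∈ ℝ^q the field implausibility (z − Γe)ᵀ (Γ V Γᵀ + W)⁻¹ (z − Γe) also exceeds T. -/

import Mathlib

open Matrix

lemma psd_cauchy_schwarz {n : ℕ} {M : Matrix (Fin n) (Fin n) ℝ} (hM : M.PosSemidef)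
    (x y : Fin n → ℝ) :
    (x ⬝ᵥ M *ᵥ y) * (x ⬝ᵥ M *ᵥ y) ≤ (x ⬝ᵥ M *ᵥ x) * (y ⬝ᵥ M *ᵥ y) := by
  have hT : Mᵀ = M := by
    ext i j
    have := congrFun (congrFun hM.1 i) j
    simpa using this
  have hsym : ∀ a b : Fin n → ℝ, a ⬝ᵥ M *ᵥ b = b ⬝ᵥ M *ᵥ a := by
    intro a b
    rw [Matrix.dotProduct_mulVec, ← Matrix.mulVec_transpose, hT, dotProduct_comm]
  have h : ∀ t : ℝ, 0 ≤ (x ⬝ᵥ M *ᵥ x) * (t * t) + (2 * (x ⬝ᵥ M *ᵥ y)) * t + (y ⬝ᵥ M *ᵥ y) := by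
    intro t
    have h0 := hM.dotProduct_mulVec_nonneg (t • x + y)
    simp only [star_trivial, mulVec_add, mulVec_smul, dotProduct_add, add_dotProduct,
      smul_dotProduct, dotProduct_smul, smul_eq_mul] at h0
    rw [← hsym x y] at h0
    have heq : (x ⬝ᵥ M *ᵥ x) * (t * t) + (2 * (x ⬝ᵥ M *ᵥ y)) * t + (y ⬝ᵥ M *ᵥ y)
        = t * (t * (x ⬝ᵥ M *ᵥ x) + x ⬝ᵥ M *ᵥ y) + (t * (x ⬝ᵥ M *ᵥ y) + y ⬝ᵥ M *ᵥ y) := by ring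
    rw [heq]
    exact h0
  have hd := discrim_le_zero h
  rw [discrim] at hd
  nlinarith [hd]

/-- The terminal case: if the reconstruction error of `z` on the truncated basis exceeds
the history-matching bound `T`, then the field implausibility exceeds `T` for every
emulator coefficient expectation `e`, so NROY space is guaranteed to be empty. -/
theorem terminal_case_empty_NROY
    {ℓ q : ℕ} (W : Matrix (Fin ℓ) (Fin ℓ) ℝ) (hW : W.PosDef)
    (Γ : Matrix (Fin ℓ) (Fin q) ℝ) (hΨ : (Γᵀ * W⁻¹ * Γ).PosDef)
    (V : Matrix (Fin q) (Fin q) ℝ) (hV : V.PosDef)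
    (z : Fin ℓ → ℝ) (T : ℝ)
    (hR : T < (z - Γ *ᵥ (((Γᵀ * W⁻¹ * Γ)⁻¹ * Γᵀ * W⁻¹) *ᵥ z)) ⬝ᵥ
        (W⁻¹ *ᵥ (z - Γ *ᵥ (((Γᵀ * W⁻¹ * Γ)⁻¹ * Γᵀ * W⁻¹) *ᵥ z)))) :
    ∀ e : Fin q → ℝ,
      T < (z - Γ *ᵥ e) ⬝ᵥ ((Γ * V * Γᵀ + W)⁻¹ *ᵥ (z - Γ *ᵥ e)) := by
  intro e
  set Ψ : Matrix (Fin q) (Fin q) ℝ := Γᵀ * W⁻¹ * Γ with hΨdef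
  set c : Fin q → ℝ := ((Ψ⁻¹ * Γᵀ * W⁻¹) *ᵥ z) with hc
  set r : Fin ℓ → ℝ := z - Γ *ᵥ c with hr
  set u : Fin ℓ → ℝ := W⁻¹ *ᵥ r with hu
  set v : Fin ℓ → ℝ := z - Γ *ᵥ e with hv
  set M : Matrix (Fin ℓ) (Fin ℓ) ℝ := Γ * V * Γᵀ + W with hM
  -- conjTranspose = transpose over ℝ
  have hct : ∀ {m n : ℕ} (A : Matrix (Fin m) (Fin n) ℝ), Aᴴ = Aᵀ := by
    intro m n A; ext i j; simp [conjTranspose_apply]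
  -- basic invertibility
  have hWdet : IsUnit W.det := (Matrix.isUnit_iff_isUnit_det W).mp hW.isUnit
  have hΨdet : IsUnit Ψ.det := (Matrix.isUnit_iff_isUnit_det Ψ).mp hΨ.isUnit
  -- M is PosDef
  have hMpd : M.PosDef := by
    have h1 : (Γ * V * Γᵀ).PosSemidef := by
      have := hV.posSemidef.mul_mul_conjTranspose_same Γ
      rwa [hct Γ] at this
    exact Matrix.PosDef.posSemidef_add h1 hW
  have hMinv : M⁻¹.PosDef := hMpd.inv
  have hMdet : IsUnit M.det := (Matrix.isUnit_iff_isUnit_det M).mp hMpd.isUnit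
  -- normal equations: Γᵀ *ᵥ u = 0
  have key : Ψ *ᵥ c = (Γᵀ * W⁻¹) *ᵥ z := by
    rw [hc, mulVec_mulVec,
      show Ψ * (Ψ⁻¹ * Γᵀ * W⁻¹) = Γᵀ * W⁻¹ from by
        rw [← Matrix.mul_assoc, ← Matrix.mul_assoc, Matrix.mul_nonsing_inv Ψ hΨdet]; simp]
  have hGu : Γᵀ *ᵥ u = 0 := by
    have e1 : Γᵀ *ᵥ u = (Γᵀ * W⁻¹) *ᵥ z - Ψ *ᵥ c := by
      simp only [hu, hr, mulVec_sub, mulVec_mulVec, hΨdef, Matrix.mul_assoc]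
    rw [e1, key, sub_self]
  -- M *ᵥ u = r
  have hMu : M *ᵥ u = r := by
    rw [hM, add_mulVec]
    have h1 : (Γ * V * Γᵀ) *ᵥ u = 0 := by
      rw [← mulVec_mulVec, hGu, mulVec_zero]
    have h2 : W *ᵥ u = r := by
      rw [hu, mulVec_mulVec, Matrix.mul_nonsing_inv W hWdet, one_mulVec]
    rw [h1, h2, zero_add]
  -- set ρ
  set ρ : ℝ := r ⬝ᵥ u with hρ
  have hTρ : T < ρ := hR
  have hρnn : 0 ≤ ρ := by
    have := hW.inv.posSemidef.dotProduct_mulVec_nonneg r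
    simpa [hu] using this
  -- u ⬝ᵥ v = ρ
  have huv : u ⬝ᵥ v = ρ := by
    have hvr : v = r + Γ *ᵥ (c - e) := by
      rw [hv, hr, mulVec_sub]; abel
    rw [hvr, dotProduct_add]
    have : u ⬝ᵥ (Γ *ᵥ (c - e)) = 0 := by
      rw [Matrix.dotProduct_mulVec, ← Matrix.mulVec_transpose, hGu, zero_dotProduct]
    rw [this, add_zero, dotProduct_comm]
  -- apply Cauchy–Schwarz with x = u, y = M⁻¹ *ᵥ v
  set y : Fin ℓ → ℝ := M⁻¹ *ᵥ v with hy
  have hMy : M *ᵥ y = v := by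
    rw [hy, mulVec_mulVec, Matrix.mul_nonsing_inv M hMdet, one_mulVec]
  have huMy : u ⬝ᵥ M *ᵥ y = ρ := by rw [hMy, huv]
  have huMu : u ⬝ᵥ M *ᵥ u = ρ := by rw [hMu, dotProduct_comm]
  have hyMy : y ⬝ᵥ M *ᵥ y = v ⬝ᵥ M⁻¹ *ᵥ v := by
    rw [hMy, hy, dotProduct_comm]
  have hcs := psd_cauchy_schwarz hMpd.posSemidef u y
  rw [huMy, huMu, hyMy] at hcs
  have hQnn : 0 ≤ v ⬝ᵥ M⁻¹ *ᵥ v := by simpa using hMinv.posSemidef.dotProduct_mulVec_nonneg v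
  rcases eq_or_lt_of_le hρnn with h0 | hpos
  · linarith
  · have : ρ ≤ v ⬝ᵥ M⁻¹ *ᵥ v := by
      have := (mul_le_mul_iff_right₀ hpos).mp (by linarith [hcs] : ρ * ρ ≤ ρ * (v ⬝ᵥ M⁻¹ *ᵥ v))
      exact this
    linarith
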